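/- In the free group F on generators x and y, let u, v ≥ 0 be integers and set a = y^{v+1} x^{-1} and b = y a^{-1}. Then the element λ = x² (y^{-v} x)^u x (y^{-v} x)^u equals a^{-1} ((ba)^v b^{u+1})² (ba)^{v+1} in F. Equivalently, a^{-3(3v+2)-2u} λ = a^{-(2u+3(3v+2)+1)} · (((ba)^v b^{u+1})² (ba)^v b) · a. -/

import Mathlib

private lemma hcomm {G : Type*} [Group G] (n : ℕ) (p q : G) :
    p * (q * p) ^ n = (p * q) ^ n * p := by
  induction n with
  | zero => simp
  | succ k ih =>
    rw [pow_succ, ← mul_assoc, ih, pow_succ]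
    group

theorem stmt11 (u v : ℕ) :
    let F := FreeGroup Bool
    let x : F := FreeGroup.of true
    let y : F := FreeGroup.of false
    let a : F := y ^ (v + 1) * x⁻¹
    let b : F := y * a⁻¹
    let lam : F := x ^ 2 * (y ^ (-(v : ℤ)) * x) ^ u * x * (y ^ (-(v : ℤ)) * x) ^ u
    lam = a⁻¹ * ((b * a) ^ v * b ^ (u + 1)) ^ 2 * (b * a) ^ (v + 1) ∧
      a ^ (-(3 * (3 * (v : ℤ) + 2)) - 2 * (u : ℤ)) * lam =
        a ^ (-(2 * (u : ℤ) + 3 * (3 * (v : ℤ) + 2) + 1)) *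
          (((b * a) ^ v * b ^ (u + 1)) ^ 2 * (b * a) ^ v * b) * a := by
  intro F x y a b lam
  have hba : b * a = y := by show y * a⁻¹ * a = y; exact inv_mul_cancel_right y a
  have hy : y ^ (-(v : ℤ)) = (y ^ v)⁻¹ := by
    rw [zpow_neg, zpow_natCast]
  have hb : b ^ (u + 1) = y * (x * (y ^ v)⁻¹) ^ u * x * (y ^ (v + 1))⁻¹ := by
    induction u with
    | zero => simp [b, a]; group
    | succ k ih =>
      rw [pow_succ, ih, show b = y * x * (y ^ (v + 1))⁻¹ by simp [b, a]; group]
      rw [pow_succ (x * (y ^ v)⁻¹), pow_succ y v]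
      group
  have key : lam = x * ((x * (y ^ v)⁻¹) ^ u * x) * ((x * (y ^ v)⁻¹) ^ u * x) := by
    show x ^ 2 * (y ^ (-(v : ℤ)) * x) ^ u * x * (y ^ (-(v : ℤ)) * x) ^ u = _
    rw [hy]
    calc x ^ 2 * ((y ^ v)⁻¹ * x) ^ u * x * ((y ^ v)⁻¹ * x) ^ u
        = x * (x * ((y ^ v)⁻¹ * x) ^ u) * (x * ((y ^ v)⁻¹ * x) ^ u) := by
          rw [pow_two]; simp [mul_assoc]
      _ = x * ((x * (y ^ v)⁻¹) ^ u * x) * ((x * (y ^ v)⁻¹) ^ u * x) := by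
          rw [hcomm (G := FreeGroup Bool)]
  have first : lam = a⁻¹ * ((b * a) ^ v * b ^ (u + 1)) ^ 2 * (b * a) ^ (v + 1) := by
    rw [hba, hb, key]
    have ha : a⁻¹ = x * (y ^ (v + 1))⁻¹ := by simp only [a]; group
    rw [ha, pow_succ y v, sq]
    group
  refine ⟨first, ?_⟩
  rw [first]
  rw [show (-(3 * (3 * (v : ℤ) + 2)) - 2 * u) =
      (-(2 * (u : ℤ) + 3 * (3 * v + 2) + 1)) + 1 by ring, zpow_add, zpow_one,
    pow_succ (b * a) v]
  have hgen : ∀ a b : FreeGroup Bool, a ^ (-(2 * (u : ℤ) + 3 * (3 * (v : ℤ) + 2) + 1)) * a * (a⁻¹ * ((b * a) ^ v * b ^ (u + 1)) ^ 2 * ((b * a) ^ v * (b * a))) =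
      a ^ (-(2 * (u : ℤ) + 3 * (3 * (v : ℤ) + 2) + 1)) * (((b * a) ^ v * b ^ (u + 1)) ^ 2 * (b * a) ^ v * b) * a := by
    intro a b
    group
  exact hgen a b
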